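/- Let k be an algebraically closed field of characteristic p > 0 and let P ∈ k[X] be a polynomial. The differential form ω = dX/P(X) is logarithmic (i.e., ω = dF/F for some rational function F ∈ k(X)) if and only if the (p-1)-th derivative of the polynomial P^(p-1) is equal to -1. -/

import Mathlib

open Polynomial Finset

/-- A meromorphic differential form `ω = f dX` on `ℙ¹_k` is *logarithmic* if `ω = dF/F`
for some `F ∈ k(X)`.  Writing `F = F₁/G₁` with `F₁, G₁ ∈ k[X]` nonzero, this means
`f = F₁'/F₁ - G₁'/G₁`. -/
def IsLogarithmic {k : Type*} [Field k] (f : RatFunc k) : Prop :=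
  ∃ F G : Polynomial k, F ≠ 0 ∧ G ≠ 0 ∧
    f = algebraMap (Polynomial k) (RatFunc k) (derivative F) /
          algebraMap (Polynomial k) (RatFunc k) F
        - algebraMap (Polynomial k) (RatFunc k) (derivative G) /
          algebraMap (Polynomial k) (RatFunc k) G

noncomputable def Ld {k : Type*} [Field k] (F : Polynomial k) : RatFunc k :=
  algebraMap (Polynomial k) (RatFunc k) (derivative F) / algebraMap (Polynomial k) (RatFunc k) F

section Lemmas
variable {k : Type*} [Field k]

variable {p : ℕ} [Fact p.Prime] [CharP k p]

theorem wilson_k : ((Nat.factorial (p-1) : ℕ) : k) = -1 := by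
  have h := ZMod.wilsons_lemma (p := p)
  calc ((Nat.factorial (p-1) : ℕ) : k)
      = (ZMod.castHom (dvd_refl p) k) ((Nat.factorial (p-1) : ℕ) : ZMod p) := by
        rw [map_natCast]
    _ = -1 := by rw [h, map_neg, map_one]

theorem iter_deriv_lin_pow (t : k) :
    derivative^[p-1] ((X - C t)^(p-1)) = -1 := by
  have h : (X : k[X]) - C t = X + C (-t) := by rw [map_neg]; ring
  rw [h, Polynomial.iterate_derivative_X_add_pow, Nat.sub_self, pow_zero,
    Nat.descFactorial_self, nsmul_eq_mul, mul_one, ← C_eq_natCast, wilson_k, map_neg, map_one]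

theorem iter_deriv_mul_pow_char (n : ℕ) (h g : k[X]) :
    derivative^[n] (h * g^p) = derivative^[n] h * g^p := by
  induction n generalizing h with
  | zero => rfl
  | succ n ih =>
      rw [Function.iterate_succ_apply, derivative_mul, derivative_pow]
      have hp0 : (C ((p : k)) : k[X]) = 0 := by rw [CharP.cast_eq_zero, map_zero]
      rw [hp0]
      simp only [zero_mul, mul_zero, add_zero]
      rw [ih (derivative h), ← Function.iterate_succ_apply]

theorem lagrange_aux [DecidableEq k] (S : Finset k) (hS : S.Nonempty) :
    ∑ t ∈ S, C ((∏ s ∈ S.erase t, (t - s))⁻¹) * ∏ s ∈ S.erase t, (X - C s) = 1 := by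
  rw [← Lagrange.sum_basis (Function.injective_id.injOn) hS]
  refine Finset.sum_congr rfl fun t ht => ?_
  rw [Lagrange.basis]
  simp only [Lagrange.basisDivisor, id]
  rw [Finset.prod_mul_distrib, ← map_prod, Finset.prod_inv_distrib]

theorem main_deriv_comp [DecidableEq k] (S : Finset k) (hS : S.Nonempty) (c : k) :
    derivative^[p-1] ((C c * ∏ t ∈ S, (X - C t))^(p-1)) =
      - (C (c^(p-1)) * ∑ t ∈ S, C ((∏ s ∈ S.erase t, (t - s))⁻¹) *
          (∏ s ∈ S.erase t, (X - C s))^p) := by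
  have hpow : ∀ h : k[X], h^(p-1) * h = h^p := fun h =>
    pow_sub_one_mul (Nat.Prime.ne_zero Fact.out) h
  have key : (C c * ∏ t ∈ S, (X - C t))^(p-1) =
      ∑ t ∈ S, C (c^(p-1)) * (C ((∏ s ∈ S.erase t, (t - s))⁻¹) *
        ((X - C t)^(p-1) * (∏ s ∈ S.erase t, (X - C s))^p)) := by
    calc (C c * ∏ t ∈ S, (X - C t))^(p-1)
        = (C c)^(p-1) * ((∏ t ∈ S, (X - C t))^(p-1) *
            ∑ t ∈ S, C ((∏ s ∈ S.erase t, (t - s))⁻¹) * ∏ s ∈ S.erase t, (X - C s)) := by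
          rw [lagrange_aux S hS, mul_one, mul_pow]
      _ = _ := by
          simp only [Finset.mul_sum]
          refine Finset.sum_congr rfl fun t ht => ?_
          rw [← Finset.mul_prod_erase S _ ht, mul_pow, C_pow, ← hpow (∏ s ∈ S.erase t, (X - C s))]
          ring
  rw [key, iterate_derivative_sum]
  have h2 : ∀ t ∈ S, derivative^[p-1] (C (c^(p-1)) *
      (C ((∏ s ∈ S.erase t, (t - s))⁻¹) * ((X - C t)^(p-1) * (∏ s ∈ S.erase t, (X - C s))^p)))
      = -(C (c^(p-1)) * (C ((∏ s ∈ S.erase t, (t - s))⁻¹) * (∏ s ∈ S.erase t, (X - C s))^p)) :=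
    fun t ht => by
      rw [iterate_derivative_C_mul, iterate_derivative_C_mul, iter_deriv_mul_pow_char,
        iter_deriv_lin_pow]
      ring
  rw [Finset.sum_congr rfl h2, Finset.sum_neg_distrib, Finset.mul_sum]



theorem exists_natCast_of_pow_card {p : ℕ} [Fact p.Prime] [CharP k p] {x : k} (hx : x ^ p = x) : ∃ m : ℕ, (m : k) = x := by
  classical
  have hp2 : 2 ≤ p := (Fact.out : p.Prime).two_le
  set φ := ZMod.castHom (dvd_refl p) k with hφ
  have hinj : Function.Injective φ := φ.injective
  set f : k[X] := X ^ p - X with hf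
  have hfne : f ≠ 0 := by
    intro h
    have : f.coeff p = 0 := by rw [h, coeff_zero]
    rw [hf, coeff_sub, coeff_X_pow, if_pos rfl, coeff_X, if_neg (by omega)] at this
    simpa using this
  have hdeg : f.natDegree ≤ p := by
    refine le_trans (natDegree_sub_le _ _) ?_
    simp [natDegree_X_pow, natDegree_X]
    omega
  have hroot : ∀ a : k, a ^ p = a → a ∈ f.roots := by
    intro a ha
    rw [mem_roots hfne]
    simp [hf, IsRoot, ha]
  by_contra hcon
  push_neg at hcon
  have hxim : x ∉ Finset.univ.image (fun i : ZMod p => φ i) := by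
    intro hmem
    obtain ⟨i, _, hi⟩ := Finset.mem_image.mp hmem
    exact hcon i.val (by rw [← hi, hφ]; rw [← map_natCast φ i.val, ZMod.natCast_val, ZMod.cast_id])
  set A : Finset k := insert x (Finset.univ.image (fun i : ZMod p => φ i)) with hA
  have hcard : #A = p + 1 := by
    rw [hA, Finset.card_insert_of_notMem hxim, Finset.card_image_of_injective _ hinj,
      Finset.card_univ, ZMod.card]
  have hsub : A.val ⊆ f.roots := by
    intro a ha
    rw [Finset.mem_val, hA, Finset.mem_insert] at ha
    rcases ha with rfl | ha
    · exact hroot _ hx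
    · obtain ⟨i, _, rfl⟩ := Finset.mem_image.mp ha
      refine hroot _ ?_
      rw [← map_pow, ZMod.pow_card]
  have := (card_le_degree_of_subset_roots hsub).trans hdeg
  omega


theorem Ld_C (a : k) : Ld (C a) = 0 := by simp [Ld]

theorem Ld_one : Ld (1 : k[X]) = 0 := by simpa using Ld_C (1 : k)

theorem Ld_mul {F G : k[X]} (hF : F ≠ 0) (hG : G ≠ 0) : Ld (F * G) = Ld F + Ld G := by
  have hF' := RatFunc.algebraMap_ne_zero hF
  have hG' := RatFunc.algebraMap_ne_zero hG
  rw [Ld, Ld, Ld, derivative_mul, map_add, map_mul, map_mul, map_mul]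
  field_simp

theorem Ld_pow {F : k[X]} (hF : F ≠ 0) (n : ℕ) :
    Ld (F ^ n) = n * Ld F := by
  induction n with
  | zero => simp [Ld_one]
  | succ n ih =>
      rw [pow_succ, Ld_mul (pow_ne_zero _ hF) hF, ih, Nat.cast_add, Nat.cast_one, add_mul,
        one_mul]

theorem Ld_prod {ι : Type*} (s : Finset ι) (f : ι → k[X]) (h : ∀ i ∈ s, f i ≠ 0) :
    Ld (∏ i ∈ s, f i) = ∑ i ∈ s, Ld (f i) := by
  classical
  induction s using Finset.induction with
  | empty => simp [Ld_one]
  | @insert a s' hx ih =>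
      rw [Finset.prod_insert hx, Finset.sum_insert hx,
        Ld_mul (h a (Finset.mem_insert_self a s'))
          (Finset.prod_ne_zero_iff.mpr fun i hi => h i (Finset.mem_insert_of_mem hi)),
        ih (fun i hi => h i (Finset.mem_insert_of_mem hi))]

theorem Ld_linear_pow (t : k) (n : ℕ) :
    Ld ((X - C t) ^ n) = algebraMap k[X] (RatFunc k) (C (n : k)) /
      algebraMap k[X] (RatFunc k) (X - C t) := by
  rw [Ld_pow (X_sub_C_ne_zero t) n, Ld, derivative_sub, derivative_X, derivative_C, sub_zero,
    map_one]
  rw [mul_one_div, C_eq_natCast, map_natCast]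

end Lemmas

theorem backward {k : Type*} [Field k] [IsAlgClosed k] (p : ℕ) [Fact p.Prime] [CharP k p]
    (P : Polynomial k) (hP : P ≠ 0)
    (h : derivative^[p-1] (P^(p-1)) = -1) :
    IsLogarithmic (1 / algebraMap (Polynomial k) (RatFunc k) P) := by
  classical
  have hp1 : 1 ≤ p - 1 := by have := (Fact.out : p.Prime).two_le; omega
  have hpne : p ≠ 0 := (Fact.out : p.Prime).ne_zero
  have hpow : ∀ h : k[X], h^(p-1) * h = h^p := fun h => pow_sub_one_mul hpne h
  have hpowk : ∀ x : k, x^(p-1) * x = x^p := fun x => pow_sub_one_mul hpne x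
  -- squarefree
  have hsq : ∀ a : k, rootMultiplicity a P ≤ 1 := by
    intro a; by_contra hge; push_neg at hge
    have h2 : (X - C a)^2 ∣ P :=
      dvd_trans (pow_dvd_pow _ hge) (P.pow_rootMultiplicity_dvd a)
    have h4 : (X - C a)^(2*(p-1)) ∣ P^(p-1) := by
      rw [pow_mul]; exact pow_dvd_pow_of_dvd h2 _
    have h5 := pow_sub_dvd_iterate_derivative_of_pow_dvd (p-1) h4
    rw [h] at h5
    have h6 : (X - C a) ∣ (-1 : k[X]) :=
      dvd_trans (dvd_pow_self _ (by omega : 2*(p-1) - (p-1) ≠ 0)) h5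
    obtain ⟨u, hu⟩ := h6
    have := congrArg (eval a) hu
    simp at this
  -- factorization
  have hfact : P = C P.leadingCoeff * (P.roots.map fun a => X - C a).prod :=
    Splits.eq_prod_roots (IsAlgClosed.splits P)
  set c : k := P.leadingCoeff with hc
  have hcne : c ≠ 0 := leadingCoeff_ne_zero.mpr hP
  have hnodup : P.roots.Nodup := by
    rw [Multiset.nodup_iff_count_le_one]
    intro a; rw [count_roots]; exact hsq a
  set S : Finset k := P.roots.toFinset with hS
  have hSval : S.val = P.roots := Multiset.Nodup.dedup hnodup
  have hfact2 : P = C c * ∏ t ∈ S, (X - C t) := by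
    rw [Finset.prod_eq_multiset_prod, hSval]; exact hfact
  have hSne : S.Nonempty := by
    rcases Finset.eq_empty_or_nonempty S with he | hne
    · exfalso
      have : P.roots = 0 := by rw [← hSval, he]; rfl
      rw [hfact, this] at h
      simp only [Multiset.map_zero, Multiset.prod_zero, mul_one, ← C_pow] at h
      rw [iterate_derivative_C (by omega)] at h
      exact (by simp : ¬ ((0:k[X]) = -1)) h
    · exact hne
  -- main identity
  rw [hfact2, main_deriv_comp S hSne c, neg_inj] at h
  -- evaluate at points of S
  set ρ : k → k := fun t => ∏ s ∈ S.erase t, (t - s) with hρ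
  have hρne : ∀ t ∈ S, ρ t ≠ 0 := by
    intro t ht
    refine Finset.prod_ne_zero_iff.mpr fun s hs => ?_
    have : s ≠ t := Finset.ne_of_mem_erase hs
    exact sub_ne_zero.mpr (fun he => this he.symm)
  have heval : ∀ t ∈ S, c^(p-1) * ((ρ t)⁻¹ * (ρ t)^p) = 1 := by
    intro t ht
    have hev := congrArg (eval t) h
    rw [eval_mul, eval_C, eval_finset_sum, eval_one] at hev
    have hzero : ∀ u ∈ S, u ≠ t →
        eval t (C ((∏ s ∈ S.erase u, (u - s))⁻¹) * (∏ s ∈ S.erase u, (X - C s)) ^ p) = 0 := by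
      intro u hu hut
      have htm : t ∈ S.erase u := Finset.mem_erase.mpr ⟨fun he => hut he.symm, ht⟩
      rw [eval_mul, eval_pow, eval_prod]
      have hz : (∏ j ∈ S.erase u, eval t (X - C j)) = 0 :=
        Finset.prod_eq_zero htm (by simp)
      rw [hz, zero_pow hpne, mul_zero]
    rw [Finset.sum_eq_single t hzero (fun hts => absurd ht hts)] at hev
    rw [eval_mul, eval_C, eval_pow, eval_prod] at hev
    simp only [eval_sub, eval_X, eval_C] at hev
    exact hev
  have hkey : ∀ t ∈ S, (c * ρ t)^(p-1) = 1 := by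
    intro t ht
    have h1 := heval t ht
    have h2 : (ρ t)⁻¹ * (ρ t)^p = (ρ t)^(p-1) := by
      rw [← hpowk (ρ t), mul_comm (ρ t ^ (p-1)) (ρ t), ← mul_assoc,
        inv_mul_cancel₀ (hρne t ht), one_mul]
    rw [h2, ← mul_pow] at h1
    exact h1
  have hwp : ∀ t ∈ S, ((c * ρ t)⁻¹)^p = (c * ρ t)⁻¹ := by
    intro t ht
    rw [← hpowk ((c * ρ t)⁻¹), inv_pow, hkey t ht, inv_one, one_mul]
  have hm' : ∀ t ∈ S, ∃ mt : ℕ, (mt : k) = (c * ρ t)⁻¹ :=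
    fun t ht => exists_natCast_of_pow_card (hwp t ht)
  set m : k → ℕ := fun t => if ht : t ∈ S then (hm' t ht).choose else 0 with hmdef
  have hm : ∀ t ∈ S, ((m t : ℕ) : k) = (c * ρ t)⁻¹ := by
    intro t ht
    simp only [hmdef, dif_pos ht]
    exact (hm' t ht).choose_spec
  set F : k[X] := ∏ t ∈ S, (X - C t)^(m t) with hFdef
  have hF : F ≠ 0 :=
    Finset.prod_ne_zero_iff.mpr fun t ht => pow_ne_zero _ (X_sub_C_ne_zero t)
  refine ⟨F, 1, hF, one_ne_zero, ?_⟩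
  rw [derivative_one, map_zero, zero_div, sub_zero]
  show (1 : RatFunc k) / algebraMap k[X] (RatFunc k) P = Ld F
  rw [hFdef, Ld_prod S _ (fun t ht => pow_ne_zero _ (X_sub_C_ne_zero t))]
  have hLd : ∀ t ∈ S, Ld ((X - C t)^(m t)) =
      algebraMap k[X] (RatFunc k) (C ((c * ρ t)⁻¹)) / algebraMap k[X] (RatFunc k) (X - C t) := by
    intro t ht
    rw [Ld_linear_pow, hm t ht]
  rw [Finset.sum_congr rfl hLd]
  have hcc : (C c : k[X]) * C (c⁻¹) = 1 := by rw [← map_mul, mul_inv_cancel₀ hcne, map_one]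
  have hmul : algebraMap k[X] (RatFunc k) P *
      (∑ t ∈ S, algebraMap k[X] (RatFunc k) (C ((c * ρ t)⁻¹)) /
        algebraMap k[X] (RatFunc k) (X - C t)) = 1 := by
    rw [Finset.mul_sum]
    have hterm : ∀ t ∈ S, algebraMap k[X] (RatFunc k) P *
        (algebraMap k[X] (RatFunc k) (C ((c * ρ t)⁻¹)) / algebraMap k[X] (RatFunc k) (X - C t)) =
        algebraMap k[X] (RatFunc k) (C ((ρ t)⁻¹) * ∏ s ∈ S.erase t, (X - C s)) := by
      intro t ht
      have hxt := RatFunc.algebraMap_ne_zero (X_sub_C_ne_zero (R := k) t)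
      have hpoly : P * C ((c * ρ t)⁻¹) =
          (C ((ρ t)⁻¹) * ∏ s ∈ S.erase t, (X - C s)) * (X - C t) := by
        rw [hfact2, ← Finset.mul_prod_erase S _ ht, mul_inv, map_mul]
        linear_combination ((X - C t) * (∏ s ∈ S.erase t, (X - C s)) * C ((ρ t)⁻¹)) * hcc
      rw [← mul_div_assoc, div_eq_iff hxt, ← map_mul, ← map_mul, hpoly]
    rw [Finset.sum_congr rfl hterm, ← map_sum, lagrange_aux S hSne, map_one]
  exact (eq_one_div_of_mul_eq_one_right hmul).symm



theorem Ld_eq_sum {k : Type*} [Field k] [IsAlgClosed k] [DecidableEq k]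
    (F : Polynomial k) (hF : F ≠ 0) :
    Ld F = ∑ t ∈ F.roots.toFinset,
      algebraMap k[X] (RatFunc k) (C ((F.roots.count t : ℕ) : k)) /
        algebraMap k[X] (RatFunc k) (X - C t) := by
  have hfact : F = C F.leadingCoeff * (F.roots.map fun a => X - C a).prod :=
    Splits.eq_prod_roots (IsAlgClosed.splits F)
  have hprod : (F.roots.map fun a => X - C a).prod =
      ∏ t ∈ F.roots.toFinset, (X - C t) ^ (F.roots.count t) :=
    Finset.prod_multiset_map_count _ _
  have hlc : (C F.leadingCoeff : k[X]) ≠ 0 := by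
    rw [Ne, C_eq_zero]; exact leadingCoeff_ne_zero.mpr hF
  have hprodne : (∏ t ∈ F.roots.toFinset, (X - C t) ^ (F.roots.count t)) ≠ 0 :=
    Finset.prod_ne_zero_iff.mpr fun t ht => pow_ne_zero _ (X_sub_C_ne_zero t)
  conv_lhs => rw [hfact, hprod]
  rw [Ld_mul hlc hprodne, Ld_C, zero_add,
    Ld_prod _ _ (fun t ht => pow_ne_zero _ (X_sub_C_ne_zero t))]
  exact Finset.sum_congr rfl fun t ht => Ld_linear_pow t _

theorem forward {k : Type*} [Field k] [IsAlgClosed k] (p : ℕ) [Fact p.Prime] [CharP k p]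
    (P : Polynomial k) (hP : P ≠ 0)
    (h : IsLogarithmic (1 / algebraMap (Polynomial k) (RatFunc k) P)) :
    derivative^[p-1] (P^(p-1)) = -1 := by
  classical
  have hpne : p ≠ 0 := (Fact.out : p.Prime).ne_zero
  obtain ⟨F, G, hF, hG, hfg⟩ := h
  have hfg' : (1 : RatFunc k) / algebraMap k[X] (RatFunc k) P = Ld F - Ld G := hfg
  rw [Ld_eq_sum F hF, Ld_eq_sum G hG] at hfg'
  set T : Finset k := F.roots.toFinset ∪ G.roots.toFinset with hT
  set z : k → k := fun t => ((F.roots.count t : ℕ) : k) - ((G.roots.count t : ℕ) : k) with hz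
  have hsum : (1 : RatFunc k) / algebraMap k[X] (RatFunc k) P =
      ∑ t ∈ T, algebraMap k[X] (RatFunc k) (C (z t)) / algebraMap k[X] (RatFunc k) (X - C t) := by
    rw [hfg']
    have e1 : ∑ t ∈ F.roots.toFinset,
        algebraMap k[X] (RatFunc k) (C ((F.roots.count t : ℕ) : k)) /
          algebraMap k[X] (RatFunc k) (X - C t) =
        ∑ t ∈ T, algebraMap k[X] (RatFunc k) (C ((F.roots.count t : ℕ) : k)) /
          algebraMap k[X] (RatFunc k) (X - C t) := by
      refine Finset.sum_subset Finset.subset_union_left fun t htT htF => ?_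
      rw [Multiset.count_eq_zero_of_notMem (fun hm => htF (Multiset.mem_toFinset.mpr hm))]
      simp
    have e2 : ∑ t ∈ G.roots.toFinset,
        algebraMap k[X] (RatFunc k) (C ((G.roots.count t : ℕ) : k)) /
          algebraMap k[X] (RatFunc k) (X - C t) =
        ∑ t ∈ T, algebraMap k[X] (RatFunc k) (C ((G.roots.count t : ℕ) : k)) /
          algebraMap k[X] (RatFunc k) (X - C t) := by
      refine Finset.sum_subset Finset.subset_union_right fun t htT htG => ?_
      rw [Multiset.count_eq_zero_of_notMem (fun hm => htG (Multiset.mem_toFinset.mpr hm))]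
      simp
    rw [e1, e2, ← Finset.sum_sub_distrib]
    refine Finset.sum_congr rfl fun t ht => ?_
    rw [div_sub_div_same, ← map_sub, ← map_sub]
  set S : Finset k := T.filter (fun t => z t ≠ 0) with hS
  have hkey : (1 : RatFunc k) / algebraMap k[X] (RatFunc k) P =
      ∑ t ∈ S, algebraMap k[X] (RatFunc k) (C (z t)) / algebraMap k[X] (RatFunc k) (X - C t) := by
    rw [hsum, hS]
    refine (Finset.sum_filter_of_ne fun t ht hne => ?_).symm
    intro hz0
    apply hne
    rw [hz0, map_zero, map_zero, zero_div]
  have hPA : algebraMap k[X] (RatFunc k) P ≠ 0 := RatFunc.algebraMap_ne_zero hP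
  have hSne : S.Nonempty := by
    rw [Finset.nonempty_iff_ne_empty]
    intro he
    rw [he, Finset.sum_empty] at hkey
    exact one_div_ne_zero hPA hkey
  have zp : ∀ t : k, (z t)^p = z t := by
    intro t
    have hrep : z t = (ZMod.castHom (dvd_refl p) k)
        (((F.roots.count t : ℕ) : ZMod p) - ((G.roots.count t : ℕ) : ZMod p)) := by
      rw [map_sub, map_natCast, map_natCast]
    rw [hrep, ← map_pow, ZMod.pow_card]
  set Q : k[X] := ∏ t ∈ S, (X - C t) with hQ
  have hQne : Q ≠ 0 := Finset.prod_ne_zero_iff.mpr fun t ht => X_sub_C_ne_zero t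
  set N : k[X] := ∑ t ∈ S, C (z t) * ∏ s ∈ S.erase t, (X - C s) with hN
  have hQN : P * N = Q := by
    apply RatFunc.algebraMap_injective k
    rw [map_mul]
    have hNA : algebraMap k[X] (RatFunc k) N =
        (∑ t ∈ S, algebraMap k[X] (RatFunc k) (C (z t)) /
          algebraMap k[X] (RatFunc k) (X - C t)) * algebraMap k[X] (RatFunc k) Q := by
      rw [hN, map_sum, Finset.sum_mul]
      refine Finset.sum_congr rfl fun t ht => ?_
      have hxt := RatFunc.algebraMap_ne_zero (X_sub_C_ne_zero (R := k) t)
      rw [div_mul_eq_mul_div, eq_div_iff hxt, ← map_mul, ← map_mul]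
      refine congrArg _ ?_
      rw [mul_assoc]
      congr 1
      exact (mul_comm _ _).trans (Finset.mul_prod_erase S (fun s => X - C s) ht)
    rw [hNA, ← hkey]
    field_simp
  have hNne : N ≠ 0 := fun h0 => hQne (by rw [← hQN, h0, mul_zero])
  set ρ : k → k := fun t => ∏ s ∈ S.erase t, (t - s) with hρ
  have hρne : ∀ t ∈ S, ρ t ≠ 0 := by
    intro t ht
    refine Finset.prod_ne_zero_iff.mpr fun s hs => ?_
    have : s ≠ t := Finset.ne_of_mem_erase hs
    exact sub_ne_zero.mpr (fun he => this he.symm)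
  have hNval : ∀ t ∈ S, eval t N = z t * ρ t := by
    intro t ht
    rw [hN, eval_finset_sum]
    have hzero : ∀ u ∈ S, u ≠ t →
        eval t (C (z u) * ∏ s ∈ S.erase u, (X - C s)) = 0 := by
      intro u hu hut
      have htm : t ∈ S.erase u := Finset.mem_erase.mpr ⟨fun he => hut he.symm, ht⟩
      rw [eval_mul, eval_prod]
      rw [Finset.prod_eq_zero htm (by simp), mul_zero]
    rw [Finset.sum_eq_single t hzero (fun hts => absurd ht hts), eval_mul, eval_C, eval_prod]
    simp only [eval_sub, eval_X, eval_C]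
    rfl
  have hzne : ∀ t ∈ S, z t ≠ 0 := fun t ht => (Finset.mem_filter.mp ht).2
  have hNC : N = C (N.coeff 0) := by
    refine eq_C_of_degree_le_zero ?_
    by_contra hdeg
    obtain ⟨a, ha⟩ := IsAlgClosed.exists_root N (fun h0 => hdeg (le_of_eq h0))
    have ha' : eval a N = 0 := ha
    have hQa : eval a Q = 0 := by
      rw [← hQN, eval_mul, ha', mul_zero]
    have haS : a ∈ S := by
      have hpz : ∏ t ∈ S, (a - t) = 0 := by
        rw [hQ, eval_prod] at hQa
        simpa using hQa
      obtain ⟨t, htS, htz⟩ := Finset.prod_eq_zero_iff.mp hpz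
      rw [sub_eq_zero] at htz
      rwa [htz]
    exact (mul_ne_zero (hzne a haS) (hρne a haS)) ((hNval a haS).symm.trans ha')
  set d : k := N.coeff 0 with hd
  have hdne : d ≠ 0 := fun h0 => hNne (by rw [hNC, h0, map_zero])
  have hQN' : P * C d = Q := by rw [← hQN]; congr 1; rw [hNC]
  have hPQ : P = C d⁻¹ * Q := by
    calc P = C d⁻¹ * (P * C d) := by
          rw [mul_comm P, ← mul_assoc, ← map_mul, inv_mul_cancel₀ hdne, map_one, one_mul]
      _ = C d⁻¹ * Q := by rw [hQN']
  have hzρ : ∀ t ∈ S, z t * ρ t = d := by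
    intro t ht
    have h1 : eval t N = d := by rw [hNC, eval_C]
    rw [← h1, hNval t ht]
  have hρinv : ∀ t ∈ S, (ρ t)⁻¹ = d⁻¹ * z t := by
    intro t ht
    have h1 := hzρ t ht
    have h2 : (ρ t)⁻¹ * (z t * ρ t) = (ρ t)⁻¹ * d := by rw [h1]
    rw [mul_comm (z t) (ρ t), ← mul_assoc, inv_mul_cancel₀ (hρne t ht), one_mul] at h2
    rw [h2, mul_comm ((ρ t)⁻¹) d, ← mul_assoc, inv_mul_cancel₀ hdne, one_mul]
  have hpowk : ∀ x : k, x^(p-1) * x = x^p := fun x => pow_sub_one_mul hpne x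
  haveI : ExpChar k[X] p := ExpChar.prime Fact.out
  have hmap : frobenius k[X] p N = frobenius k[X] p (C d) := congrArg _ hNC
  rw [hN, map_sum] at hmap
  simp only [frobenius_def, mul_pow, ← C_pow, zp] at hmap
  have hfrob : ∑ t ∈ S, C (z t) * (∏ s ∈ S.erase t, (X - C s))^p = C (d^p) := hmap
  rw [hPQ, hQ, main_deriv_comp S hSne d⁻¹, neg_inj]
  have hsum2 : ∑ t ∈ S, C ((∏ s ∈ S.erase t, (t - s))⁻¹) * (∏ s ∈ S.erase t, (X - C s))^p
      = C d⁻¹ * ∑ t ∈ S, C (z t) * (∏ s ∈ S.erase t, (X - C s))^p := by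
    rw [Finset.mul_sum]
    refine Finset.sum_congr rfl fun t ht => ?_
    rw [show (∏ s ∈ S.erase t, (t - s))⁻¹ = (ρ t)⁻¹ from rfl, hρinv t ht, map_mul, mul_assoc]
  rw [hsum2, hfrob, ← map_mul, ← map_mul]
  have hscal : (d⁻¹)^(p-1) * (d⁻¹ * d^p) = 1 := by
    rw [← mul_assoc, hpowk d⁻¹, ← mul_pow, inv_mul_cancel₀ hdne, one_pow]
  rw [hscal, map_one]


/-- The differential form `ω = dX / P(X)` is logarithmic if and only if the `(p-1)`-th
derivative of `P^(p-1)` equals `-1`. -/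
theorem logarithmic_iff_derivative_pow_eq_neg_one
    {k : Type*} [Field k] [IsAlgClosed k] (p : ℕ) [Fact p.Prime] [CharP k p]
    (P : Polynomial k) (hP : P ≠ 0) :
    IsLogarithmic (1 / algebraMap (Polynomial k) (RatFunc k) P) ↔
      derivative^[p - 1] (P ^ (p - 1)) = -1 :=
  ⟨forward p P hP, backward p P hP⟩
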